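/- arXiv:1711.06570 — 6 statements merged into one kernel-verified Lean document; each statement's English description precedes it below -/
import Mathlib

section
/- For every choice of initial data u₀, v₀ ∈ ℝⁿ there exists a unique twice continuously differentiable function x : [0,+∞) → ℝⁿ such that ẍ(t) + γẋ(t) + x(t) = prox_{λf}(x(t) − λ∇g(x(t))) for all t ∈ [0,+∞), x(0) = u₀ and ẋ(0) = v₀. -/
open Set Filter Topology MeasureTheory

open scoped NNReal

section Global
variable {F : Type*} [NormedAddCommGroup F] [NormedSpace ℝ F] [CompleteSpace F]

lemma my_hasDerivWithinAt_singleton (f : ℝ → F) (d : F) (x : ℝ) :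
    HasDerivWithinAt f d {x} x := by
  simp only [HasDerivWithinAt, HasFDerivWithinAt, nhdsWithin_singleton,
    hasDerivAtFilter_iff_isLittleO, Asymptotics.isLittleO_pure, sub_self,
    hasFDerivAtFilter_iff_isLittleO, Filter.prod_pure_pure, zero_smul, sub_zero, zero_sub, neg_eq_zero]

/-- One Picard–Lindelöf step of length `h` for a globally Lipschitz autonomous field. -/
lemma step_sol (V : F → F) (K : ℝ≥0) (hV : LipschitzWith K V)
    {h : ℝ} (hh : 0 < h) (hKh : (K : ℝ) * h ≤ 1/2) (a : ℝ) (x₀ : F) :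
    ∃ Y : ℝ → F, Y a = x₀ ∧
      ∀ t ∈ Icc a (a + h), HasDerivWithinAt Y (V (Y t)) (Icc a (a + h)) t := by
  set R : ℝ := 2 * h * (‖V x₀‖ + 1) with hR
  have hR0 : 0 ≤ R := by positivity
  have hL0 : 0 ≤ ‖V x₀‖ + K * R := by positivity
  have hpl : IsPicardLindelof (fun _ : ℝ => V) (tmin := a) (tmax := a + h) ⟨a, le_rfl, by linarith⟩
      x₀ R.toNNReal 0 (‖V x₀‖ + K * R).toNNReal K := by
    refine ⟨fun t _ => hV.lipschitzOnWith, fun x _ => continuousOn_const,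
      fun t _ x hx => ?_, ?_⟩
    · rw [Real.coe_toNNReal _ hR0] at hx
      rw [Real.coe_toNNReal _ hL0]
      have h1 : ‖V x - V x₀‖ ≤ K * ‖x - x₀‖ := by
        simpa [dist_eq_norm] using hV.dist_le_mul x x₀
      have hxx : ‖x - x₀‖ ≤ R := by
        simpa [dist_eq_norm] using Metric.mem_closedBall.1 hx
      have h2 : (K:ℝ) * ‖x - x₀‖ ≤ K * R := mul_le_mul_of_nonneg_left hxx K.coe_nonneg
      calc ‖V x‖ ≤ ‖V x₀‖ + ‖V x - V x₀‖ := by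
              have := norm_add_le (V x₀) (V x - V x₀); simpa using this
        _ ≤ ‖V x₀‖ + K * R := by linarith
    · dsimp only
      simp only [Real.coe_toNNReal _ hL0, Real.coe_toNNReal _ hR0, NNReal.coe_zero, sub_zero]
      have hmax : max (a + h - a) (a - a) = h := by
        rw [max_eq_left] <;> linarith
      rw [hmax]
      have h1 : ‖V x₀‖ * h ≤ h * (‖V x₀‖ + 1) := by nlinarith [norm_nonneg (V x₀)]
      have h2 : (K:ℝ) * R * h ≤ h * (‖V x₀‖ + 1) := by
        have : (K:ℝ) * h * (2 * h * (‖V x₀‖ + 1)) ≤ (1/2) * (2 * h * (‖V x₀‖ + 1)) := by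
          apply mul_le_mul_of_nonneg_right hKh; positivity
        nlinarith
      nlinarith
  obtain ⟨Y, hY0, hY⟩ := hpl.exists_eq_forall_mem_Icc_hasDerivWithinAt₀
  exact ⟨Y, hY0, hY⟩

lemma global_sol (V : F → F) (K : ℝ≥0) (hV : LipschitzWith K V) (X₀ : F) :
    ∃ X : ℝ → F, X 0 = X₀ ∧ ∀ t ∈ Ici (0:ℝ), HasDerivWithinAt X (V (X t)) (Ici 0) t := by
  set h : ℝ := 1 / (2 * (K + 1)) with hdef
  have hh : 0 < h := by positivity
  have hKh : (K : ℝ) * h ≤ 1/2 := by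
    have h2 : (0:ℝ) < 2 * ((K:ℝ) + 1) := by positivity
    rw [hdef, mul_one_div, div_le_div_iff₀ h2 two_pos]
    nlinarith [K.coe_nonneg]
  have main : ∀ k : ℕ, ∃ X : ℝ → F, X 0 = X₀ ∧
      ∀ t ∈ Icc 0 ((k:ℝ)*h), HasDerivWithinAt X (V (X t)) (Icc 0 ((k:ℝ)*h)) t := by
    intro k
    induction k with
    | zero =>
      refine ⟨fun _ => X₀, rfl, ?_⟩
      intro t ht
      simp only [Nat.cast_zero, zero_mul, Icc_self, mem_singleton_iff] at ht ⊢
      subst ht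
      exact my_hasDerivWithinAt_singleton _ _ _
    | succ k ih =>
      obtain ⟨X, hX0, hX⟩ := ih
      obtain ⟨a, ha⟩ : ∃ a : ℝ, a = (k:ℝ) * h := ⟨_, rfl⟩
      rw [← ha] at hX
      have ha0 : 0 ≤ a := by rw [ha]; positivity
      obtain ⟨Y, hY0, hY⟩ := step_sol V K hV hh hKh a (X a)
      have hcast : ((k+1 : ℕ):ℝ) * h = a + h := by rw [ha]; push_cast; ring
      rw [hcast]
      refine ⟨fun t => if t ≤ a then X t else Y t, by simp [ha0, hX0], ?_⟩
      intro t ht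
      set Z : ℝ → F := fun t => if t ≤ a then X t else Y t with hZ
      have hZX : EqOn Z X (Icc 0 a) := fun s hs => if_pos hs.2
      have hZY : EqOn Z Y (Icc a (a+h)) := by
        intro s hs
        by_cases hsa : s ≤ a
        · have : s = a := le_antisymm hsa hs.1
          simp [hZ, this, hY0]
        · simp [hZ, hsa]
      have hIcc : Icc (0:ℝ) a ∪ Icc a (a+h) = Icc 0 (a+h) :=
        Icc_union_Icc_eq_Icc ha0 (by linarith)
      rcases lt_trichotomy t a with hlt | heq | hgt
      · have ht' : t ∈ Icc 0 a := ⟨ht.1, hlt.le⟩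
        have hZt : Z t = X t := hZX ht'
        have hd : HasDerivWithinAt Z (V (Z t)) (Icc 0 a) t := by
          rw [hZt]; exact (hX t ht').congr (fun s hs => hZX hs) hZt
        exact hd.mono_of_mem_nhdsWithin (mem_nhdsWithin.2
          ⟨Iio a, isOpen_Iio, hlt, fun s hs => ⟨hs.2.1, hs.1.le.trans (by linarith)⟩⟩)
      · subst heq
        have ht1 : t ∈ Icc 0 t := ⟨ht.1, le_rfl⟩
        have ht2 : t ∈ Icc t (t+h) := ⟨le_rfl, by linarith⟩
        have hZt : Z t = X t := hZX ht1
        have hZt' : Z t = Y t := hZY ht2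
        have hd1 : HasDerivWithinAt Z (V (Z t)) (Icc 0 t) t := by
          rw [hZt]; exact (hX t ht1).congr (fun s hs => hZX hs) hZt
        have hd2 : HasDerivWithinAt Z (V (Z t)) (Icc t (t+h)) t := by
          rw [hZt']; exact (hY t ht2).congr (fun s hs => hZY hs) hZt'
        have := hd1.union hd2
        rwa [hIcc] at this
      · have ht' : t ∈ Icc a (a+h) := ⟨hgt.le, ht.2⟩
        have hZt : Z t = Y t := hZY ht'
        have hd : HasDerivWithinAt Z (V (Z t)) (Icc a (a+h)) t := by
          rw [hZt]; exact (hY t ht').congr (fun s hs => hZY hs) hZt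
        exact hd.mono_of_mem_nhdsWithin (mem_nhdsWithin.2
          ⟨Ioi a, isOpen_Ioi, hgt, fun s hs => ⟨le_of_lt hs.1, hs.2.2⟩⟩)
  choose S hS0 hS using main
  have huniq : ∀ j k : ℕ, ∀ s : ℝ, s ∈ Icc 0 (min ((j:ℝ)*h) ((k:ℝ)*h)) → S j s = S k s := by
    have key : ∀ j k : ℕ, (j:ℝ)*h ≤ (k:ℝ)*h → EqOn (S j) (S k) (Icc 0 ((j:ℝ)*h)) := by
      intro j k hjk
      have hsub : Icc (0:ℝ) ((j:ℝ)*h) ⊆ Icc 0 ((k:ℝ)*h) := Icc_subset_Icc le_rfl hjk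
      have derivIci : ∀ (m : ℕ) (t : ℝ), t ∈ Ico 0 ((j:ℝ)*h) → (j:ℝ)*h ≤ (m:ℝ)*h →
          HasDerivWithinAt (S m) (V (S m t)) (Ici t) t := by
        intro m t ht hle
        have htm : t ∈ Icc 0 ((m:ℝ)*h) := ⟨ht.1, ht.2.le.trans hle⟩
        refine (hS m t htm).mono_of_mem_nhdsWithin (mem_nhdsWithin.2
          ⟨Iio ((m:ℝ)*h), isOpen_Iio, lt_of_lt_of_le ht.2 hle,
            fun s hs => ⟨ht.1.trans hs.2, hs.1.le⟩⟩)
      refine ODE_solution_unique (v := fun _ : ℝ => V) (K := K) (fun _ => hV) ?_ ?_ ?_ ?_ ?_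
      · exact fun s hs => (hS j s hs).continuousWithinAt
      · exact fun t ht => derivIci j t ht le_rfl
      · exact fun s hs => ((hS k s (hsub hs)).continuousWithinAt).mono hsub
      · exact fun t ht => derivIci k t ht hjk
      · rw [hS0 j, hS0 k]
    intro j k s hs
    rcases le_total ((j:ℝ)*h) ((k:ℝ)*h) with hle | hle
    · exact key j k hle ⟨hs.1, hs.2.trans (min_le_left _ _)⟩
    · exact (key k j hle ⟨hs.1, hs.2.trans (min_le_right _ _)⟩).symm
  set N : ℝ → ℕ := fun t => ⌈t / h⌉₊ + 1 with hN
  set X : ℝ → F := fun t => S (N t) t with hX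
  have hmem : ∀ t : ℝ, 0 ≤ t → t < (↑(N t) : ℝ) * h := by
    intro t ht0
    have h1 : t / h < (↑(N t) : ℝ) := by
      have h2 := Nat.le_ceil (t / h)
      have h3 : ((⌈t / h⌉₊ : ℝ)) < ((N t : ℕ) : ℝ) := by
        simp only [hN]; push_cast; linarith
      linarith
    calc t = (t / h) * h := by field_simp
      _ < (↑(N t):ℝ) * h := mul_lt_mul_of_pos_right h1 hh
  refine ⟨X, hS0 _, ?_⟩
  intro t ht
  have ht0 : (0:ℝ) ≤ t := ht
  have htn : t < (↑(N t):ℝ) * h := hmem t ht0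
  have hXeq : EqOn X (S (N t)) (Icc 0 ((↑(N t):ℝ)*h)) := by
    intro s hs
    exact huniq (N s) (N t) s ⟨hs.1, le_min (le_of_lt (hmem s hs.1)) hs.2⟩
  have htIcc : t ∈ Icc 0 ((↑(N t):ℝ)*h) := ⟨ht0, htn.le⟩
  have hXt : X t = S (N t) t := hXeq htIcc
  have hd : HasDerivWithinAt X (V (X t)) (Icc 0 ((↑(N t):ℝ)*h)) t := by
    rw [hXt]; exact (hS (N t) t htIcc).congr (fun s hs => hXeq hs) hXt
  exact hd.mono_of_mem_nhdsWithin (mem_nhdsWithin.2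
    ⟨Iio ((↑(N t):ℝ)*h), isOpen_Iio, htn, fun s hs => ⟨hs.2, hs.1.le⟩⟩)
end Global



lemma midnorm {n : ℕ} (p y z : EuclideanSpace ℝ (Fin n)) :
    ‖(1/2:ℝ)•p + (1/2:ℝ)•y - z‖^2
      = (1/2)*‖p-z‖^2 + (1/2)*‖y-z‖^2 - (1/4)*‖p-y‖^2 := by
  have h1 : (1/2:ℝ)•p + (1/2:ℝ)•y - z = (1/2:ℝ) • ((p-z)+(y-z)) := by
    rw [smul_add]; module
  rw [h1, norm_smul]
  have par := parallelogram_law_with_norm ℝ (p-z) (y-z)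
  have h2 : (p-z)-(y-z) = p - y := by abel
  rw [h2] at par
  rw [Real.norm_eq_abs]
  rw [show |(1/2:ℝ)| = 1/2 by norm_num]
  nlinarith [par]

lemma inner_quad {n : ℕ} (p₁ p₂ z₁ z₂ : EuclideanSpace ℝ (Fin n)) :
    ‖p₂-z₁‖^2+‖p₁-z₂‖^2-‖p₁-z₁‖^2-‖p₂-z₂‖^2 = 2 * (inner ℝ (p₁-p₂) (z₁-z₂) : ℝ) := by
  rw [norm_sub_sq_real p₂ z₁, norm_sub_sq_real p₁ z₂, norm_sub_sq_real p₁ z₁,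
    norm_sub_sq_real p₂ z₂]
  simp only [inner_sub_left, inner_sub_right]
  ring

lemma finite_fprox {n : ℕ} (lam : ℝ) (hlam : 0 < lam)
  (f : EuclideanSpace ℝ (Fin n) → EReal)
  (hproper : (∃ z, f z ≠ ⊤) ∧ (∀ z, f z ≠ ⊥))
  (prox : EuclideanSpace ℝ (Fin n) → EuclideanSpace ℝ (Fin n))
  (hprox : ∀ z y : EuclideanSpace ℝ (Fin n), f (prox z) + (((1/(2*lam)) * ‖prox z - z‖^2 : ℝ) : EReal)
      ≤ f y + (((1/(2*lam)) * ‖y - z‖^2 : ℝ) : EReal)) : ∀ z : EuclideanSpace ℝ (Fin n), ∃ a : ℝ, f (prox z) = (a : EReal) := by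
  intro z
  obtain ⟨z₀, hz₀⟩ := hproper.1
  have h := hprox z z₀
  obtain ⟨r₀, hr₀⟩ : ∃ r₀ : ℝ, f z₀ = (r₀ : EReal) :=
    ⟨(f z₀).toReal, (EReal.coe_toReal hz₀ (hproper.2 z₀)).symm⟩
  have hbot : f (prox z) ≠ ⊥ := hproper.2 _
  have htop : f (prox z) ≠ ⊤ := by
    intro htop
    rw [htop, hr₀, ← EReal.coe_add] at h
    rw [EReal.top_add_of_ne_bot (by exact EReal.coe_ne_bot _)] at h
    exact (EReal.coe_lt_top _).not_ge h
  exact ⟨(f (prox z)).toReal, (EReal.coe_toReal htop hbot).symm⟩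

lemma strong_min {n : ℕ} (lam : ℝ) (hlam : 0 < lam)
  (f : EuclideanSpace ℝ (Fin n) → EReal)
  (hconv : ∀ x y : EuclideanSpace ℝ (Fin n), ∀ t : ℝ, 0 ≤ t → t ≤ 1 →
      f (t • x + (1 - t) • y) ≤ (t : EReal) * f x + ((1 - t : ℝ) : EReal) * f y)
  (prox : EuclideanSpace ℝ (Fin n) → EuclideanSpace ℝ (Fin n))
  (hprox : ∀ z y : EuclideanSpace ℝ (Fin n), f (prox z) + (((1/(2*lam)) * ‖prox z - z‖^2 : ℝ) : EReal)
      ≤ f y + (((1/(2*lam)) * ‖y - z‖^2 : ℝ) : EReal)) : ∀ z y : EuclideanSpace ℝ (Fin n), ∀ a b : ℝ, f (prox z) = (a : EReal) → f y = (b : EReal) →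
    a + (1/(2*lam))*‖prox z - z‖^2 + (1/(4*lam))*‖prox z - y‖^2
      ≤ b + (1/(2*lam))*‖y - z‖^2 := by
  intro z y a b hfa hfy
  have hc0 : (0:ℝ) < 1/(2*lam) := by positivity
  have hconvm : f ((1/2:ℝ) • prox z + (1/2:ℝ) • y) ≤ ((a/2 + b/2 : ℝ) : EReal) := by
    have h := hconv (prox z) y (1/2) (by norm_num) (by norm_num)
    rw [show (1 - (1/2:ℝ)) = 1/2 by norm_num] at h
    rw [hfa, hfy] at h
    refine h.trans_eq ?_
    rw [← EReal.coe_mul, ← EReal.coe_mul, ← EReal.coe_add]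
    exact congrArg _ (by ring)
  have h := hprox z ((1/2:ℝ) • prox z + (1/2:ℝ) • y)
  rw [hfa] at h
  have h2 : ((a + (1/(2*lam))*‖prox z - z‖^2 : ℝ) : EReal)
      ≤ ((a/2 + b/2 + (1/(2*lam))*‖((1/2:ℝ) • prox z + (1/2:ℝ) • y) - z‖^2 : ℝ) : EReal) := by
    rw [EReal.coe_add, EReal.coe_add]
    exact h.trans (add_le_add_left hconvm _)
  have key : a + (1/(2*lam))*‖prox z - z‖^2
      ≤ a/2 + b/2 + (1/(2*lam))*‖((1/2:ℝ) • prox z + (1/2:ℝ) • y) - z‖^2 := by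
    exact_mod_cast h2
  rw [midnorm (prox z) y z] at key
  have h4 : (1:ℝ)/(4*lam) = (1/(2*lam))/2 := by ring
  rw [h4]
  have hl : (0:ℝ) < lam⁻¹ := by positivity
  ring_nf at key ⊢
  linarith

lemma prox_lip {n : ℕ} (lam : ℝ) (hlam : 0 < lam)
  (f : EuclideanSpace ℝ (Fin n) → EReal)
  (hproper : (∃ z, f z ≠ ⊤) ∧ (∀ z, f z ≠ ⊥))
  (hconv : ∀ x y : EuclideanSpace ℝ (Fin n), ∀ t : ℝ, 0 ≤ t → t ≤ 1 →
      f (t • x + (1 - t) • y) ≤ (t : EReal) * f x + ((1 - t : ℝ) : EReal) * f y)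
  (prox : EuclideanSpace ℝ (Fin n) → EuclideanSpace ℝ (Fin n))
  (hprox : ∀ z y : EuclideanSpace ℝ (Fin n), f (prox z) + (((1/(2*lam)) * ‖prox z - z‖^2 : ℝ) : EReal)
      ≤ f y + (((1/(2*lam)) * ‖y - z‖^2 : ℝ) : EReal)) : ∀ z₁ z₂ : EuclideanSpace ℝ (Fin n), ‖prox z₁ - prox z₂‖ ≤ 2 * ‖z₁ - z₂‖ := by
  intro z₁ z₂
  obtain ⟨a, hfa⟩ := finite_fprox lam hlam f hproper prox hprox z₁
  obtain ⟨b, hfb⟩ := finite_fprox lam hlam f hproper prox hprox z₂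
  have h1 := strong_min lam hlam f hconv prox hprox z₁ (prox z₂) a b hfa hfb
  have h2 := strong_min lam hlam f hconv prox hprox z₂ (prox z₁) b a hfb hfa
  set p₁ : EuclideanSpace ℝ (Fin n) := prox z₁
  set p₂ : EuclideanSpace ℝ (Fin n) := prox z₂
  have hsym : ‖p₂ - p₁‖ = ‖p₁ - p₂‖ := by rw [← norm_neg]; congr 1; abel
  rw [hsym] at h2
  have hc0 : 0 < 1/(2*lam) := by positivity
  have hsum : ‖p₁-z₁‖^2 + ‖p₂-z₂‖^2 + ‖p₁-p₂‖^2 ≤ ‖p₂-z₁‖^2 + ‖p₁-z₂‖^2 := by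
    have h3 : (1/(2*lam))*(‖p₁-z₁‖^2 + ‖p₂-z₂‖^2 + ‖p₁-p₂‖^2)
        ≤ (1/(2*lam))*(‖p₂-z₁‖^2 + ‖p₁-z₂‖^2) := by
      have e1 : 1/(4*lam) = (1/(2*lam))/2 := by field_simp; ring
      rw [e1] at h1 h2
      linarith
    exact le_of_mul_le_mul_left h3 hc0
  have hquad := inner_quad p₁ p₂ z₁ z₂
  have hip : (inner ℝ (p₁-p₂) (z₁-z₂) : ℝ) ≤ ‖p₁-p₂‖ * ‖z₁-z₂‖ := real_inner_le_norm _ _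
  have hdd : ‖p₁-p₂‖^2 ≤ 2 * (‖p₁-p₂‖ * ‖z₁-z₂‖) := by linarith
  nlinarith [norm_nonneg (p₁-p₂), norm_nonneg (z₁-z₂), sq_nonneg (‖p₁-p₂‖ - 2*‖z₁-z₂‖)]

noncomputable def Lone (γ lam β : ℝ) : ℝ :=
  Real.sqrt (max ((γ + 1)^2) ((γ + 2) * ((1 + lam * β)^2 + 1)))

noncomputable def Ltwo (γ lam β : ℝ) : ℝ :=
  Real.sqrt (max ((γ + 1)^2 + γ * lam * β) ((2 + lam * β)^2 + γ * (2 + lam * β)))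

noncomputable def LL (γ lam β : ℝ) : ℝ := min (Lone γ lam β) (Ltwo γ lam β)

noncomputable def AA (γ lam β : ℝ) : ℝ :=
  -(γ / (2 * lam)) + (β / 2) * ((LL γ lam β)^2 + 2 * γ^2 + 1)

noncomputable def BB (γ lam β : ℝ) : ℝ :=
  -(γ / (2 * lam * (LL γ lam β)^2)) + (β / 2) * ((LL γ lam β)^2 + γ^2 + 1)

noncomputable def CC (γ lam β : ℝ) : ℝ :=
  -((2 * (LL γ lam β)^2 + 1) / ((LL γ lam β)^2 + 1)^2) * γ^2 + 3 * β * γ * lam - 1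

/-- The convex subdifferential of `f` at `x`. -/
def subdiff {n : ℕ} (f : EuclideanSpace ℝ (Fin n) → EReal)
    (x : EuclideanSpace ℝ (Fin n)) : Set (EuclideanSpace ℝ (Fin n)) :=
  {v | ∀ y, f x + ((inner ℝ v (y - x) : ℝ) : EReal) ≤ f y}

/-- The regularized function `H(u,v,w) = (f+g)(u) + (1/(2λ))‖u-v‖² - (C/(2λ))‖w‖²`. -/
noncomputable def Hfun {n : ℕ} (f : EuclideanSpace ℝ (Fin n) → EReal)
    (g : EuclideanSpace ℝ (Fin n) → ℝ) (lam Cv : ℝ)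
    (p : EuclideanSpace ℝ (Fin n) × EuclideanSpace ℝ (Fin n) × EuclideanSpace ℝ (Fin n)) : EReal :=
  f p.1 + ((g p.1 + (1/(2*lam)) * ‖p.1 - p.2.1‖^2 - (Cv/(2*lam)) * ‖p.2.2‖^2 : ℝ) : EReal)

/-- The Euclidean norm on the product `ℝⁿ × ℝⁿ × ℝⁿ`. -/
noncomputable def e3 {n : ℕ}
    (p : EuclideanSpace ℝ (Fin n) × EuclideanSpace ℝ (Fin n) × EuclideanSpace ℝ (Fin n)) : ℝ :=
  Real.sqrt (‖p.1‖^2 + ‖p.2.1‖^2 + ‖p.2.2‖^2)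

/-- The (limiting) subdifferential of `H` at `(u,v,w)`. -/
def Sset {n : ℕ} (f : EuclideanSpace ℝ (Fin n) → EReal)
    (g' : EuclideanSpace ℝ (Fin n) → EuclideanSpace ℝ (Fin n)) (lam Cv : ℝ)
    (u v w : EuclideanSpace ℝ (Fin n)) :
    Set (EuclideanSpace ℝ (Fin n) × EuclideanSpace ℝ (Fin n) × EuclideanSpace ℝ (Fin n)) :=
  {q | ∃ p ∈ subdiff f u,
    q = (p + g' u + (1/lam) • (u - v), -((1/lam) • (u - v)), -((Cv/lam) • w))}

/-- A C² solution of the dynamical system (2) on `[0,∞)` with initial data `u₀, v₀`. -/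
def IsSol {n : ℕ} (prox g' : EuclideanSpace ℝ (Fin n) → EuclideanSpace ℝ (Fin n))
    (γ lam : ℝ) (u₀ v₀ : EuclideanSpace ℝ (Fin n))
    (x x' x'' : ℝ → EuclideanSpace ℝ (Fin n)) : Prop :=
  (∀ t ∈ Ici (0:ℝ), HasDerivWithinAt x (x' t) (Ici 0) t) ∧
  (∀ t ∈ Ici (0:ℝ), HasDerivWithinAt x' (x'' t) (Ici 0) t) ∧
  ContinuousOn x'' (Ici 0) ∧
  (∀ t ∈ Ici (0:ℝ), x'' t + γ • x' t + x t = prox (x t - lam • g' (x t))) ∧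
  x 0 = u₀ ∧ x' 0 = v₀

theorem stmt_0 (n : ℕ) (hn : 1 ≤ n) (β lam γ : ℝ)
    (hβ : 0 ≤ β) (hlam : 0 < lam) (hγ : 0 < γ)
    (f : EuclideanSpace ℝ (Fin n) → EReal)
    (hproper : (∃ z, f z ≠ ⊤) ∧ (∀ z, f z ≠ ⊥))
    (hconv : ∀ x y : EuclideanSpace ℝ (Fin n), ∀ t : ℝ, 0 ≤ t → t ≤ 1 →
      f (t • x + (1 - t) • y) ≤ (t : EReal) * f x + ((1 - t : ℝ) : EReal) * f y)
    (hlsc : LowerSemicontinuous f)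
    (g : EuclideanSpace ℝ (Fin n) → ℝ)
    (g' : EuclideanSpace ℝ (Fin n) → EuclideanSpace ℝ (Fin n))
    (hg : ∀ u, HasGradientAt g (g' u) u)
    (hglip : ∀ u v, ‖g' u - g' v‖ ≤ β * ‖u - v‖)
    (prox : EuclideanSpace ℝ (Fin n) → EuclideanSpace ℝ (Fin n))
    (hprox : ∀ z y, f (prox z) + (((1/(2*lam)) * ‖prox z - z‖^2 : ℝ) : EReal)
      ≤ f y + (((1/(2*lam)) * ‖y - z‖^2 : ℝ) : EReal))
    (hproxu : ∀ z y, (∀ w, f y + (((1/(2*lam)) * ‖y - z‖^2 : ℝ) : EReal)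
      ≤ f w + (((1/(2*lam)) * ‖w - z‖^2 : ℝ) : EReal)) → y = prox z)
    (u₀ v₀ : EuclideanSpace ℝ (Fin n)) :
    (∃ x x' x'' : ℝ → EuclideanSpace ℝ (Fin n), IsSol prox g' γ lam u₀ v₀ x x' x'') ∧
    (∀ x x' x'' y y' y'' : ℝ → EuclideanSpace ℝ (Fin n),
      IsSol prox g' γ lam u₀ v₀ x x' x'' → IsSol prox g' γ lam u₀ v₀ y y' y'' →
      EqOn x y (Ici 0)) := by
    classical
  have hFxlip : ∀ u v : EuclideanSpace ℝ (Fin n),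
      ‖prox (u - lam • g' u) - prox (v - lam • g' v)‖ ≤ (2*(1+lam*β)) * ‖u - v‖ := by
    intro u v
    have h1 := prox_lip lam hlam f hproper hconv prox hprox (u - lam • g' u) (v - lam • g' v)
    have h2 : ‖(u - lam • g' u) - (v - lam • g' v)‖ ≤ (1 + lam*β) * ‖u - v‖ := by
      have e1 : (u - lam • g' u) - (v - lam • g' v) = (u - v) - lam • (g' u - g' v) := by
        rw [smul_sub]; abel
      rw [e1]
      refine (norm_sub_le _ _).trans ?_
      rw [norm_smul, Real.norm_eq_abs, abs_of_pos hlam]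
      have := hglip u v
      nlinarith [norm_nonneg (u - v)]
    calc ‖prox (u - lam • g' u) - prox (v - lam • g' v)‖
        ≤ 2 * ‖(u - lam • g' u) - (v - lam • g' v)‖ := h1
      _ ≤ 2 * ((1 + lam*β) * ‖u - v‖) := by linarith
      _ = (2*(1+lam*β)) * ‖u - v‖ := by ring
  set V : (EuclideanSpace ℝ (Fin n)) × (EuclideanSpace ℝ (Fin n))
      → (EuclideanSpace ℝ (Fin n)) × (EuclideanSpace ℝ (Fin n)) :=
    fun p => (p.2, prox (p.1 - lam • g' p.1) - γ • p.2 - p.1) with hV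
  have hKV0 : (0:ℝ) ≤ 2*(1+lam*β) + γ + 2 := by nlinarith
  have hVlipn : ∀ p q, ‖V p - V q‖ ≤ (2*(1+lam*β) + γ + 2) * ‖p - q‖ := by
    intro p q
    have hf1 : ‖p.1 - q.1‖ ≤ ‖p - q‖ := by
      have := norm_fst_le (p - q); simpa using this
    have hf2 : ‖p.2 - q.2‖ ≤ ‖p - q‖ := by
      have := norm_snd_le (p - q); simpa using this
    have hn0 : (0:ℝ) ≤ ‖p - q‖ := norm_nonneg _
    have hFb := hFxlip p.1 q.1
    have hsnd : ‖(V p - V q).2‖ ≤ (2*(1+lam*β) + γ + 2) * ‖p - q‖ := by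
      have e2 : (V p - V q).2
          = (prox (p.1 - lam • g' p.1) - prox (q.1 - lam • g' q.1))
            - γ • (p.2 - q.2) - (p.1 - q.1) := by
        simp only [hV, Prod.snd_sub, smul_sub]; abel
      rw [e2]
      refine (norm_sub_le _ _).trans ?_
      have h3 : ‖prox (p.1 - lam • g' p.1) - prox (q.1 - lam • g' q.1) - γ • (p.2 - q.2)‖
          ≤ (2*(1+lam*β)) * ‖p - q‖ + γ * ‖p - q‖ := by
        refine (norm_sub_le _ _).trans ?_
        have h4 : ‖γ • (p.2 - q.2)‖ = γ * ‖p.2 - q.2‖ := by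
          rw [norm_smul, Real.norm_eq_abs, abs_of_pos hγ]
        have h5 : (2*(1+lam*β)) * ‖p.1 - q.1‖ ≤ (2*(1+lam*β)) * ‖p - q‖ := by
          apply mul_le_mul_of_nonneg_left hf1; nlinarith
        have h6 : γ * ‖p.2 - q.2‖ ≤ γ * ‖p - q‖ :=
          mul_le_mul_of_nonneg_left hf2 hγ.le
        rw [h4]
        linarith [hFb.trans h5]
      have h7 : ‖p.1 - q.1‖ ≤ 2 * ‖p - q‖ := by linarith
      nlinarith
    have hfst : ‖(V p - V q).1‖ ≤ (2*(1+lam*β) + γ + 2) * ‖p - q‖ := by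
      have e1 : (V p - V q).1 = p.2 - q.2 := by simp [hV]
      rw [e1]
      have h8 : (1:ℝ) ≤ 2*(1+lam*β) + γ + 2 := by nlinarith
      calc ‖p.2 - q.2‖ ≤ ‖p - q‖ := hf2
        _ ≤ (2*(1+lam*β) + γ + 2) * ‖p - q‖ := le_mul_of_one_le_left hn0 h8
    rw [Prod.norm_def]
    exact max_le hfst hsnd
  have hVlip : LipschitzWith (Real.toNNReal (2*(1+lam*β) + γ + 2)) V := by
    apply LipschitzWith.of_dist_le_mul
    intro p q
    rw [dist_eq_norm, dist_eq_norm, Real.coe_toNNReal _ hKV0]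
    exact hVlipn p q
  constructor
  · -- existence
    obtain ⟨X, hX0, hXd⟩ := global_sol V _ hVlip (u₀, v₀)
    refine ⟨fun t => (X t).1, fun t => (X t).2,
      fun t => prox ((X t).1 - lam • g' (X t).1) - γ • (X t).2 - (X t).1, ?_, ?_, ?_, ?_, ?_, ?_⟩
    · intro t ht
      exact (ContinuousLinearMap.fst ℝ (EuclideanSpace ℝ (Fin n)) (EuclideanSpace ℝ (Fin n))
        ).hasFDerivAt.comp_hasDerivWithinAt t (hXd t ht)
    · intro t ht
      exact (ContinuousLinearMap.snd ℝ (EuclideanSpace ℝ (Fin n)) (EuclideanSpace ℝ (Fin n))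
        ).hasFDerivAt.comp_hasDerivWithinAt t (hXd t ht)
    · have hXc : ContinuousOn X (Ici 0) := fun t ht => (hXd t ht).continuousWithinAt
      have hVc : Continuous V := hVlip.continuous
      have : ContinuousOn (fun t => V (X t)) (Ici 0) := hVc.comp_continuousOn hXc
      exact (continuous_snd.comp_continuousOn this)
    · intro t ht
      module
    · show (X 0).1 = u₀
      rw [hX0]
    · show (X 0).2 = v₀
      rw [hX0]
  · -- uniqueness
    intro x x' x'' y y' y'' hx hy
    obtain ⟨hx1, hx2, hx3, hx4, hx5, hx6⟩ := hx
    obtain ⟨hy1, hy2, hy3, hy4, hy5, hy6⟩ := hy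
    have hXd : ∀ t ∈ Ici (0:ℝ), HasDerivWithinAt (fun t => (x t, x' t))
        (V (x t, x' t)) (Ici 0) t := by
      intro t ht
      have heq : x'' t = prox (x t - lam • g' (x t)) - γ • x' t - x t := by
        rw [← hx4 t ht]; abel
      have h2 := hx2 t ht
      rw [heq] at h2
      exact (hx1 t ht).prodMk h2
    have hYd : ∀ t ∈ Ici (0:ℝ), HasDerivWithinAt (fun t => (y t, y' t))
        (V (y t, y' t)) (Ici 0) t := by
      intro t ht
      have heq : y'' t = prox (y t - lam • g' (y t)) - γ • y' t - y t := by
        rw [← hy4 t ht]; abel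
      have h2 := hy2 t ht
      rw [heq] at h2
      exact (hy1 t ht).prodMk h2
    intro t ht
    have ht0 : (0:ℝ) ≤ t := ht
    have key : EqOn (fun t => (x t, x' t)) (fun t => (y t, y' t)) (Icc 0 t) := by
      refine ODE_solution_unique (v := fun _ => V)
        (K := Real.toNNReal (2*(1+lam*β) + γ + 2)) (fun _ => hVlip) ?_ ?_ ?_ ?_ ?_
      · intro s hs
        exact ((hXd s hs.1).continuousWithinAt).mono (fun r hr => hr.1)
      · intro s hs
        exact (hXd s hs.1).mono (Ici_subset_Ici.2 hs.1)
      · intro s hs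
        exact ((hYd s hs.1).continuousWithinAt).mono (fun r hr => hr.1)
      · intro s hs
        exact (hYd s hs.1).mono (Ici_subset_Ici.2 hs.1)
      · simp only [hx5, hx6, hy5, hy6]
    have := key (right_mem_Icc.2 ht0)
    exact congrArg Prod.fst this
end

section
/- The map F : ℝⁿ × ℝⁿ → ℝⁿ × ℝⁿ defined by F(u,v) := (v, prox_{λf}(u − λ∇g(u)) − γv − u) is globally Lipschitz continuous with Lipschitz constant L₂ := √(max{(γ+1)² + γλβ, (2+λβ)² + γ(2+λβ)}), i.e. ‖F(u,v) − F(ū,v̄)‖ ≤ L₂‖(u,v) − (ū,v̄)‖ for all (u,v), (ū,v̄) ∈ ℝⁿ × ℝⁿ. -/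
open Set Filter Topology MeasureTheory

set_option maxHeartbeats 2000000 in
theorem stmt_3 (n : ℕ) (hn : 1 ≤ n) (β lam γ : ℝ)
    (hβ : 0 ≤ β) (hlam : 0 < lam) (hγ : 0 < γ)
    (f : EuclideanSpace ℝ (Fin n) → EReal)
    (hproper : (∃ z, f z ≠ ⊤) ∧ (∀ z, f z ≠ ⊥))
    (hconv : ∀ x y : EuclideanSpace ℝ (Fin n), ∀ t : ℝ, 0 ≤ t → t ≤ 1 →
      f (t • x + (1 - t) • y) ≤ (t : EReal) * f x + ((1 - t : ℝ) : EReal) * f y)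
    (hlsc : LowerSemicontinuous f)
    (g : EuclideanSpace ℝ (Fin n) → ℝ)
    (g' : EuclideanSpace ℝ (Fin n) → EuclideanSpace ℝ (Fin n))
    (hg : ∀ u, HasGradientAt g (g' u) u)
    (hglip : ∀ u v, ‖g' u - g' v‖ ≤ β * ‖u - v‖)
    (prox : EuclideanSpace ℝ (Fin n) → EuclideanSpace ℝ (Fin n))
    (hprox : ∀ z y, f (prox z) + (((1/(2*lam)) * ‖prox z - z‖^2 : ℝ) : EReal)
      ≤ f y + (((1/(2*lam)) * ‖y - z‖^2 : ℝ) : EReal))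
    (hproxu : ∀ z y, (∀ w, f y + (((1/(2*lam)) * ‖y - z‖^2 : ℝ) : EReal)
      ≤ f w + (((1/(2*lam)) * ‖w - z‖^2 : ℝ) : EReal)) → y = prox z)
    :
    ∀ u v ub vb : EuclideanSpace ℝ (Fin n),
      Real.sqrt (‖v - vb‖^2 +
          ‖(prox (u - lam • g' u) - γ • v - u) - (prox (ub - lam • g' ub) - γ • vb - ub)‖^2)
        ≤ Ltwo γ lam β * Real.sqrt (‖u - ub‖^2 + ‖v - vb‖^2) := by
  have hne : ∀ z z' : EuclideanSpace ℝ (Fin n), ‖prox z - prox z'‖ ≤ ‖z - z'‖ := by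
    obtain ⟨⟨z₀, hz₀top⟩, hbot⟩ := hproper
    obtain ⟨G₀, hG₀⟩ : ∃ r : ℝ, f z₀ = (r : EReal) := by
      lift f z₀ to ℝ using ⟨hz₀top, hbot z₀⟩ with r; exact ⟨r, rfl⟩
    have hfin : ∀ z, ∃ r : ℝ, f (prox z) = (r : EReal) := by
      intro z
      have h := hprox z z₀
      rw [hG₀] at h
      have htop : f (prox z) ≠ ⊤ := by
        intro hT
        rw [hT, EReal.top_add_coe, ← EReal.coe_add] at h
        exact (EReal.coe_lt_top _).not_ge h
      lift f (prox z) to ℝ using ⟨htop, hbot _⟩ with r; exact ⟨r, rfl⟩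
    have tendaux : ∀ rp C K : ℝ, 0 ≤ K → (∀ t : ℝ, 0 < t → t ≤ 1 → rp ≤ C + t*K) → rp ≤ C := by
      intro rp C K hK0 h
      by_contra hcon
      push_neg at hcon
      have hε0 : 0 < rp - C := by linarith
      have ht := h (min 1 ((rp - C)/(2*(K+1)))) (by positivity) (min_le_left _ _)
      have h7 : min 1 ((rp - C)/(2*(K+1))) * K ≤ ((rp - C)/(2*(K+1))) * K :=
        mul_le_mul_of_nonneg_right (min_le_right _ _) hK0
      have h8 : ((rp - C)/(2*(K+1))) * K < rp - C := by
        rw [div_mul_eq_mul_div, div_lt_iff₀ (by linarith)]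
        nlinarith
      linarith
    have hsub : ∀ z y (rp G : ℝ), f (prox z) = (rp:EReal) → f y = (G:EReal) →
        rp ≤ G + (1/lam) * (inner ℝ (prox z - z) (y - prox z) : ℝ) := by
      intro z y rp G hrp hG
      refine tendaux rp _ ((1/(2*lam)) * ‖y - prox z‖^2) (by positivity) ?_
      intro t ht0 ht1
      have h1 := hprox z (t • y + (1-t) • prox z)
      have h2 := hconv y (prox z) t ht0.le ht1
      rw [hrp, hG] at h2
      rw [hrp] at h1
      have h3 : f (t • y + (1-t) • prox z)
            + (((1/(2*lam)) * ‖(t • y + (1-t) • prox z) - z‖^2 : ℝ) : EReal)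
          ≤ ((t*G + (1-t)*rp + (1/(2*lam)) * ‖(t • y + (1-t) • prox z) - z‖^2 : ℝ) : EReal) := by
        calc f (t • y + (1-t) • prox z)
              + (((1/(2*lam)) * ‖(t • y + (1-t) • prox z) - z‖^2 : ℝ) : EReal)
            ≤ ((t:EReal) * (G:EReal) + ((1-t:ℝ):EReal) * (rp:EReal))
              + (((1/(2*lam)) * ‖(t • y + (1-t) • prox z) - z‖^2 : ℝ) : EReal) :=
              add_le_add_left h2 _
          _ = _ := by norm_cast
      have h4 : ((rp + (1/(2*lam)) * ‖prox z - z‖^2 : ℝ) : EReal)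
          ≤ ((t*G + (1-t)*rp + (1/(2*lam)) * ‖(t • y + (1-t) • prox z) - z‖^2 : ℝ) : EReal) := by
        refine le_trans ?_ h3
        rw [EReal.coe_add]
        exact h1
      have h5 : rp + (1/(2*lam)) * ‖prox z - z‖^2
          ≤ t*G + (1-t)*rp + (1/(2*lam)) * ‖(t • y + (1-t) • prox z) - z‖^2 := by
        exact_mod_cast h4
      have hexp : (t • y + (1-t) • prox z) - z = (prox z - z) + t • (y - prox z) := by
        rw [sub_smul, one_smul]
        module
      have hnorm : ‖(t • y + (1-t) • prox z) - z‖^2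
          = ‖prox z - z‖^2 + 2 * t * (inner ℝ (prox z - z) (y - prox z) : ℝ)
            + t^2 * ‖y - prox z‖^2 := by
        rw [hexp, @norm_add_sq_real, real_inner_smul_right, norm_smul,
          Real.norm_eq_abs, abs_of_pos ht0, mul_pow]
        try ring
      rw [hnorm] at h5
      have e0 : (1:ℝ)/lam = 2*(1/(2*lam)) := by field_simp
      rw [e0]
      have h6 : t * rp ≤ t * (G + 2*(1/(2*lam)) * (inner ℝ (prox z - z) (y - prox z) : ℝ)
          + t * ((1/(2*lam)) * ‖y - prox z‖^2)) := by nlinarith [h5]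
      have := le_of_mul_le_mul_left h6 ht0
      linarith
    intro z z'
    obtain ⟨rp, hrp⟩ := hfin z
    obtain ⟨rp', hrp'⟩ := hfin z'
    have h1 := hsub z (prox z') rp rp' hrp hrp'
    have h2 := hsub z' (prox z) rp' rp hrp' hrp
    set p := prox z with hp
    set p' := prox z' with hp'
    have hl : (0:ℝ) < 1/lam := by positivity
    have hexp : (inner ℝ (p - z) (p' - p) : ℝ) + (inner ℝ (p' - z') (p - p') : ℝ)
        = (inner ℝ (z - z') (p - p') : ℝ) - ‖p - p'‖^2 := by
      have e1 : p' - p = -(p - p') := by abel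
      have hd : (inner ℝ ((z - z') - (p - p')) (p - p') : ℝ)
          = (inner ℝ (z - z') (p - p') : ℝ) - ‖p - p'‖^2 := by
        rw [inner_sub_left, real_inner_self_eq_norm_sq]
      rw [e1, inner_neg_right, show p' - z' = ((z - z') - (p - p')) + (p - z) by abel,
        inner_add_left, hd]
      ring
    have hin : ‖p - p'‖^2 ≤ (inner ℝ (z - z') (p - p') : ℝ) := by nlinarith [h1, h2]
    have hcs := real_inner_le_norm (z - z') (p - p')
    nlinarith [norm_nonneg (p - p'), norm_nonneg (z - z'), hin, hcs]
  intro u v ub vb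
  have hnz : ‖(u - lam • g' u) - (ub - lam • g' ub)‖ ≤ (1 + lam*β) * ‖u - ub‖ := by
    have e : (u - lam • g' u) - (ub - lam • g' ub) = (u - ub) - lam • (g' u - g' ub) := by
      rw [smul_sub]; abel
    rw [e]
    calc ‖(u - ub) - lam • (g' u - g' ub)‖ ≤ ‖u - ub‖ + ‖lam • (g' u - g' ub)‖ :=
          norm_sub_le _ _
      _ = ‖u - ub‖ + lam * ‖g' u - g' ub‖ := by
          rw [norm_smul, Real.norm_eq_abs, abs_of_pos hlam]
      _ ≤ ‖u - ub‖ + lam * (β * ‖u - ub‖) := by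
          have := hglip u ub
          nlinarith [hglip u ub]
      _ = (1 + lam*β) * ‖u - ub‖ := by ring
  have hd : ‖prox (u - lam • g' u) - prox (ub - lam • g' ub)‖ ≤ (1 + lam*β) * ‖u - ub‖ :=
    (hne _ _).trans hnz
  have hc : ‖(prox (u - lam • g' u) - γ • v - u) - (prox (ub - lam • g' ub) - γ • vb - ub)‖
      ≤ (2 + lam*β) * ‖u - ub‖ + γ * ‖v - vb‖ := by
    have e : (prox (u - lam • g' u) - γ • v - u) - (prox (ub - lam • g' ub) - γ • vb - ub)
        = ((prox (u - lam • g' u) - prox (ub - lam • g' ub)) - γ • (v - vb)) - (u - ub) := by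
      rw [smul_sub]; abel
    rw [e]
    calc ‖((prox (u - lam • g' u) - prox (ub - lam • g' ub)) - γ • (v - vb)) - (u - ub)‖
        ≤ ‖(prox (u - lam • g' u) - prox (ub - lam • g' ub)) - γ • (v - vb)‖ + ‖u - ub‖ :=
          norm_sub_le _ _
      _ ≤ ‖prox (u - lam • g' u) - prox (ub - lam • g' ub)‖ + ‖γ • (v - vb)‖ + ‖u - ub‖ := by
          have := norm_sub_le (prox (u - lam • g' u) - prox (ub - lam • g' ub)) (γ • (v - vb))
          linarith
      _ = ‖prox (u - lam • g' u) - prox (ub - lam • g' ub)‖ + γ * ‖v - vb‖ + ‖u - ub‖ := by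
          rw [norm_smul, Real.norm_eq_abs, abs_of_pos hγ]
      _ ≤ (2 + lam*β) * ‖u - ub‖ + γ * ‖v - vb‖ := by linarith
  set a := ‖u - ub‖ with ha
  set b := ‖v - vb‖ with hb
  set c := ‖(prox (u - lam • g' u) - γ • v - u) - (prox (ub - lam • g' ub) - γ • vb - ub)‖ with hcdef
  have ha0 : 0 ≤ a := norm_nonneg _
  have hb0 : 0 ≤ b := norm_nonneg _
  have hc0 : 0 ≤ c := norm_nonneg _
  set M := max ((γ + 1)^2 + γ * lam * β) ((2 + lam * β)^2 + γ * (2 + lam * β)) with hM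
  have hM0 : 0 ≤ M := le_trans (by positivity) (le_max_left _ _)
  have hc2 : c^2 ≤ ((2 + lam*β)*a + γ*b)^2 := by
    have := pow_le_pow_left₀ hc0 hc 2
    linarith [this]
  have hkey : b^2 + c^2 ≤ M * (a^2 + b^2) := by
    have hm1 : (γ + 1)^2 + γ * lam * β ≤ M := le_max_left _ _
    have hm2 : (2 + lam * β)^2 + γ * (2 + lam * β) ≤ M := le_max_right _ _
    have hlb : (0:ℝ) ≤ lam*β := mul_nonneg hlam.le hβ
    nlinarith [hc2, mul_nonneg (mul_nonneg hγ.le (by linarith : (0:ℝ) ≤ 2 + lam*β))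
      (sq_nonneg (a - b)), sq_nonneg a, sq_nonneg b,
      mul_nonneg (sub_nonneg.2 hm1) (sq_nonneg b), mul_nonneg (sub_nonneg.2 hm2) (sq_nonneg a)]
  calc Real.sqrt (b^2 + c^2) ≤ Real.sqrt (M * (a^2 + b^2)) := Real.sqrt_le_sqrt hkey
    _ = Real.sqrt M * Real.sqrt (a^2 + b^2) := Real.sqrt_mul hM0 _
    _ = Ltwo γ lam β * Real.sqrt (a^2 + b^2) := by rw [Ltwo, hM]
end

section
/- Let γ, λ > 0 and β ≥ 0 be real numbers with γ ≤ √3. Then L₂ ≤ L₁, and moreover L₂ = √((2+λβ)² + γ(2+λβ)), where L₁ := √(max{(γ+1)², (γ+2)((1+λβ)²+1)}) and L₂ := √(max{(γ+1)² + γλβ, (2+λβ)² + γ(2+λβ)}). -/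
open Set Filter Topology MeasureTheory

theorem stmt_4 (γ lam β : ℝ) (hγ : 0 < γ) (hlam : 0 < lam) (hβ : 0 ≤ β)
    (hγ3 : γ ≤ Real.sqrt 3) :
    Ltwo γ lam β ≤ Lone γ lam β ∧
    Ltwo γ lam β = Real.sqrt ((2 + lam * β)^2 + γ * (2 + lam * β)) := by
  have ht : 0 ≤ lam * β := mul_nonneg hlam.le hβ
  have hγ2 : γ^2 ≤ 3 := by
    have := Real.sq_sqrt (by norm_num : (0:ℝ) ≤ 3)
    nlinarith [Real.sqrt_nonneg 3]
  have h1 : (γ + 1)^2 + γ * lam * β ≤ (2 + lam * β)^2 + γ * (2 + lam * β) := by nlinarith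
  have heq : Ltwo γ lam β = Real.sqrt ((2 + lam * β)^2 + γ * (2 + lam * β)) := by
    unfold Ltwo; rw [max_eq_right h1]
  refine ⟨?_, heq⟩
  rw [heq]
  unfold Lone
  apply Real.sqrt_le_sqrt
  refine le_trans ?_ (le_max_right _ _)
  nlinarith [mul_nonneg ht ht, mul_nonneg hγ.le (mul_nonneg ht ht), mul_nonneg hγ.le ht]
end

section
/- Let x : [0,+∞) → ℝⁿ be the unique twice continuously differentiable global solution of the dynamical system (2). Then ẍ is locally Lipschitz continuous on [0,+∞), so the third derivative x⁽³⁾(t) exists for almost every t ∈ [0,+∞), and for almost every t ∈ [0,+∞) one has ‖x⁽³⁾(t)‖² ≤ L²‖ẋ(t)‖² + (L² − 1)‖ẍ(t)‖², where L := min{L₁, L₂}. -/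
open Set Filter Topology MeasureTheory

lemma ereal_fin (z : EReal) (h1 : z ≠ ⊤) (h2 : z ≠ ⊥) : ∃ r : ℝ, z = (r : EReal) := by
  induction z <;> simp_all

variable {E : Type*} [NormedAddCommGroup E] [InnerProductSpace ℝ E]

lemma comb_norm (u v : E) (t : ℝ) (ht : 0 ≤ t) (ht1 : t ≤ 1) :
    ‖t • u + (1 - t) • v‖^2 = t * ‖u‖^2 + (1-t) * ‖v‖^2 - t*(1-t)*‖u-v‖^2 := by
  have h1 := norm_add_sq_real (t • u) ((1-t) • v)
  have h2 := norm_sub_sq_real u v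
  have h3 : (inner ℝ (t • u) ((1-t) • v) : ℝ) = t * (1-t) * (inner ℝ u v : ℝ) := by
    rw [real_inner_smul_left, real_inner_smul_right]; ring
  rw [h1, h3, norm_smul, norm_smul]
  simp only [Real.norm_eq_abs, abs_of_nonneg ht, abs_of_nonneg (by linarith : (0:ℝ) ≤ 1-t)]
  linear_combination (t*(1-t)) * h2

-- key prox inequality, abstracted
lemma prox_key {f : E → EReal} {lam : ℝ} (hlam : 0 < lam)
    (hbot : ∀ z, f z ≠ ⊥)
    (hconv : ∀ x y : E, ∀ t : ℝ, 0 ≤ t → t ≤ 1 →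
      f (t • x + (1 - t) • y) ≤ (t : EReal) * f x + ((1 - t : ℝ) : EReal) * f y)
    (prox : E → E)
    (hprox : ∀ z y, f (prox z) + (((1/(2*lam)) * ‖prox z - z‖^2 : ℝ) : EReal)
      ≤ f y + (((1/(2*lam)) * ‖y - z‖^2 : ℝ) : EReal))
    (a q : E) (rp rq : ℝ) (hp : f (prox a) = (rp : EReal)) (hq : f q = (rq : EReal)) :
    rp + (1/(2*lam))*‖prox a - a‖^2 + (1/(2*lam))*‖q - prox a‖^2
      ≤ rq + (1/(2*lam))*‖q - a‖^2 := by
  set c := 1/(2*lam) with hcdef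
  have hc : 0 < c := by positivity
  set p := prox a with hpdef
  have main : ∀ t : ℝ, 0 < t → t < 1 →
      rp + c*‖p - a‖^2 + c*(1-t)*‖q - p‖^2 ≤ rq + c*‖q - a‖^2 := by
    intro t ht0 ht1
    set y := t • q + (1-t) • p with hydef
    have hyle : f y ≤ ((t*rq + (1-t)*rp : ℝ) : EReal) := by
      have h := hconv q p t ht0.le ht1.le
      rw [hq, hp] at h
      rw [← hydef] at h
      calc f y ≤ (t : EReal) * (rq : EReal) + ((1-t : ℝ) : EReal) * (rp : EReal) := h
        _ = ((t*rq + (1-t)*rp : ℝ) : EReal) := by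
            rw [← EReal.coe_mul, ← EReal.coe_mul, ← EReal.coe_add]
    obtain ⟨ry, hy⟩ : ∃ ry : ℝ, f y = (ry : EReal) :=
      ereal_fin _ (ne_top_of_le_ne_top (EReal.coe_ne_top _) hyle) (hbot y)
    have hyr : ry ≤ t*rq + (1-t)*rp := by
      rw [hy] at hyle; exact_mod_cast hyle
    have hpr := hprox a y
    rw [hp, hy, ← hpdef] at hpr
    have hpr' : rp + c*‖p - a‖^2 ≤ ry + c*‖y - a‖^2 := by
      rw [← EReal.coe_add, ← EReal.coe_add] at hpr
      exact_mod_cast hpr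
    have hid : ‖y - a‖^2 = t*‖q-a‖^2 + (1-t)*‖p-a‖^2 - t*(1-t)*‖q-p‖^2 := by
      have h := comb_norm (q - a) (p - a) t ht0.le ht1.le
      have he : y - a = t • (q - a) + (1 - t) • (p - a) := by
        rw [hydef]; module
      have he2 : q - a - (p - a) = q - p := by abel
      rw [he, h, he2]
    rw [hid] at hpr'
    have h2 : t * (rp + c*‖p - a‖^2 + c*(1-t)*‖q - p‖^2) ≤ t * (rq + c*‖q - a‖^2) := by
      nlinarith [hpr', hyr]
    exact le_of_mul_le_mul_left h2 ht0
  have htend : Tendsto (fun t : ℝ => rp + c*‖p - a‖^2 + c*(1-t)*‖q - p‖^2) (𝓝[>] (0:ℝ))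
      (𝓝 (rp + c*‖p - a‖^2 + c*‖q - p‖^2)) := by
    have : Continuous (fun t : ℝ => rp + c*‖p - a‖^2 + c*(1-t)*‖q - p‖^2) := by continuity
    have h0 := this.tendsto 0
    simp only [sub_zero, mul_one] at h0
    exact h0.mono_left nhdsWithin_le_nhds
  refine le_of_tendsto htend ?_
  filter_upwards [Ioo_mem_nhdsGT_of_mem (Set.left_mem_Ico.mpr one_pos)] with t ht
  exact main t ht.1 ht.2

lemma prox_nonexp {f : E → EReal} {lam : ℝ} (hlam : 0 < lam)
    (hproper : (∃ z, f z ≠ ⊤) ∧ (∀ z, f z ≠ ⊥))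
    (hconv : ∀ x y : E, ∀ t : ℝ, 0 ≤ t → t ≤ 1 →
      f (t • x + (1 - t) • y) ≤ (t : EReal) * f x + ((1 - t : ℝ) : EReal) * f y)
    (prox : E → E)
    (hprox : ∀ z y, f (prox z) + (((1/(2*lam)) * ‖prox z - z‖^2 : ℝ) : EReal)
      ≤ f y + (((1/(2*lam)) * ‖y - z‖^2 : ℝ) : EReal))
    (a b : E) : ‖prox a - prox b‖ ≤ ‖a - b‖ := by
  set c := 1/(2*lam) with hcdef
  have hc : 0 < c := by positivity
  have hfin : ∀ z, ∃ r : ℝ, f (prox z) = (r : EReal) := by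
    intro z
    obtain ⟨z₀, hz₀⟩ := hproper.1
    obtain ⟨r₀, hr₀⟩ := ereal_fin _ hz₀ (hproper.2 z₀)
    have h := hprox z z₀
    rw [hr₀, ← EReal.coe_add] at h
    refine ereal_fin _ (fun htop => ?_) (hproper.2 _)
    rw [htop, EReal.top_add_coe] at h
    exact (ne_top_of_le_ne_top (ne_of_beq_false rfl) h) rfl
  obtain ⟨rp, hp⟩ := hfin a
  obtain ⟨rq, hq⟩ := hfin b
  set p := prox a
  set q := prox b
  have h1 := prox_key hlam hproper.2 hconv prox hprox a q rp rq hp hq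
  have h2 := prox_key hlam hproper.2 hconv prox hprox b p rq rp hq hp
  have hsym : ‖q - p‖ = ‖p - q‖ := norm_sub_rev _ _
  rw [hsym] at h1
  -- sum and divide by c
  have hsum : 2*‖p - q‖^2 ≤ ‖q - a‖^2 - ‖p - a‖^2 + ‖p - b‖^2 - ‖q - b‖^2 := by
    have h3 : c * (‖p-a‖^2 + ‖q-b‖^2 + 2*‖p-q‖^2) ≤ c * (‖q-a‖^2 + ‖p-b‖^2) := by
      have h1' : rp + c*‖p - a‖^2 + c*‖p - q‖^2 ≤ rq + c*‖q - a‖^2 := h1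
      have h2' : rq + c*‖q - b‖^2 + c*‖p - q‖^2 ≤ rp + c*‖p - b‖^2 := h2
      linarith
    have := le_of_mul_le_mul_left h3 hc
    linarith
  have hexp : ‖q - a‖^2 - ‖p - a‖^2 + ‖p - b‖^2 - ‖q - b‖^2
      = 2 * (inner ℝ (p - q) (a - b) : ℝ) := by
    simp only [norm_sub_sq_real, inner_sub_left, inner_sub_right]
    ring
  rw [hexp] at hsum
  have hcs : (inner ℝ (p - q) (a - b) : ℝ) ≤ ‖p - q‖ * ‖a - b‖ := real_inner_le_norm _ _
  rcases eq_or_lt_of_le (norm_nonneg (p - q)) with h0 | h0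
  · rw [← h0]; exact norm_nonneg _
  · nlinarith

lemma num1 (γ c a b M : ℝ) (hγ : 0 < γ) (hc : 0 ≤ c) (ha : 0 ≤ a) (hb : 0 ≤ b)
    (hm1 : (γ+1)^2 ≤ M) (hm2 : (γ+2)*((1+c)^2+1) ≤ M) :
    ((2+c)*a+γ*b)^2 ≤ M*a^2+(M-1)*b^2 := by
  have step1 : ((2+c)*a+γ*b)^2 ≤ (γ+2)*((1+c)^2+1)*a^2 + γ*(γ+2)*b^2 := by
    nlinarith [sq_nonneg ((1+c)*a - a), mul_nonneg hγ.le (sq_nonneg ((1+c)*a - b)),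
      mul_nonneg hγ.le (sq_nonneg (a - b))]
  nlinarith [sq_nonneg a, sq_nonneg b]

lemma num2 (γ c a b M : ℝ) (hγ : 0 < γ) (hc : 0 ≤ c) (ha : 0 ≤ a) (hb : 0 ≤ b)
    (hm1 : (γ+1)^2 + γ*c ≤ M) (hm2 : (2+c)^2 + γ*(2+c) ≤ M) :
    ((2+c)*a+γ*b)^2 ≤ M*a^2+(M-1)*b^2 := by
  have step1 : ((2+c)*a+γ*b)^2 ≤ (2+c)*(2+c+γ)*a^2 + γ*(2+c+γ)*b^2 := by
    nlinarith [mul_nonneg (mul_nonneg (by linarith : (0:ℝ) ≤ 2+c) hγ.le) (sq_nonneg (a-b))]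
  nlinarith [sq_nonneg a, sq_nonneg b]

set_option maxHeartbeats 1000000

theorem stmt_5 (n : ℕ) (hn : 1 ≤ n) (β lam γ : ℝ)
    (hβ : 0 ≤ β) (hlam : 0 < lam) (hγ : 0 < γ)
    (f : EuclideanSpace ℝ (Fin n) → EReal)
    (hproper : (∃ z, f z ≠ ⊤) ∧ (∀ z, f z ≠ ⊥))
    (hconv : ∀ x y : EuclideanSpace ℝ (Fin n), ∀ t : ℝ, 0 ≤ t → t ≤ 1 →
      f (t • x + (1 - t) • y) ≤ (t : EReal) * f x + ((1 - t : ℝ) : EReal) * f y)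
    (hlsc : LowerSemicontinuous f)
    (g : EuclideanSpace ℝ (Fin n) → ℝ)
    (g' : EuclideanSpace ℝ (Fin n) → EuclideanSpace ℝ (Fin n))
    (hg : ∀ u, HasGradientAt g (g' u) u)
    (hglip : ∀ u v, ‖g' u - g' v‖ ≤ β * ‖u - v‖)
    (prox : EuclideanSpace ℝ (Fin n) → EuclideanSpace ℝ (Fin n))
    (hprox : ∀ z y, f (prox z) + (((1/(2*lam)) * ‖prox z - z‖^2 : ℝ) : EReal)
      ≤ f y + (((1/(2*lam)) * ‖y - z‖^2 : ℝ) : EReal))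
    (hproxu : ∀ z y, (∀ w, f y + (((1/(2*lam)) * ‖y - z‖^2 : ℝ) : EReal)
      ≤ f w + (((1/(2*lam)) * ‖w - z‖^2 : ℝ) : EReal)) → y = prox z)
    (x x' x'' : ℝ → EuclideanSpace ℝ (Fin n))
    (hx1 : ∀ t ∈ Ici (0:ℝ), HasDerivWithinAt x (x' t) (Ici 0) t)
    (hx2 : ∀ t ∈ Ici (0:ℝ), HasDerivWithinAt x' (x'' t) (Ici 0) t)
    (hx2c : ContinuousOn x'' (Ici 0))
    (hode : ∀ t ∈ Ici (0:ℝ), x'' t + γ • x' t + x t = prox (x t - lam • g' (x t)))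
    :
    (∀ T : ℝ, 0 ≤ T → ∃ K : NNReal, LipschitzOnWith K x'' (Icc 0 T)) ∧
    ∃ x3 : ℝ → EuclideanSpace ℝ (Fin n),
      ∀ᵐ t ∂(volume.restrict (Ici (0:ℝ))),
        HasDerivWithinAt x'' (x3 t) (Ici 0) t ∧
        ‖x3 t‖^2 ≤ (LL γ lam β)^2 * ‖x' t‖^2 + ((LL γ lam β)^2 - 1) * ‖x'' t‖^2 := by

  classical
  set c0 : ℝ := lam * β with hc0def
  have hc0 : 0 ≤ c0 := mul_nonneg hlam.le hβ
  -- nonexpansiveness of prox and Lipschitz property of the forward-backward map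
  have hnonexp : ∀ a b, ‖prox a - prox b‖ ≤ ‖a - b‖ :=
    prox_nonexp hlam hproper hconv prox hprox
  have Philip : ∀ u v : EuclideanSpace ℝ (Fin n),
      ‖prox (u - lam • g' u) - prox (v - lam • g' v)‖ ≤ (1 + c0) * ‖u - v‖ := by
    intro u v
    calc ‖prox (u - lam • g' u) - prox (v - lam • g' v)‖
        ≤ ‖(u - lam • g' u) - (v - lam • g' v)‖ := hnonexp _ _
      _ = ‖(u - v) - lam • (g' u - g' v)‖ := by congr 1; rw [smul_sub]; abel
      _ ≤ ‖u - v‖ + ‖lam • (g' u - g' v)‖ := norm_sub_le _ _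
      _ = ‖u - v‖ + lam * ‖g' u - g' v‖ := by
          rw [norm_smul, Real.norm_eq_abs, abs_of_pos hlam]
      _ ≤ ‖u - v‖ + lam * (β * ‖u - v‖) := by
          have := hglip u v
          nlinarith [hlam.le]
      _ = (1 + c0) * ‖u - v‖ := by rw [hc0def]; ring
  -- part 1: local Lipschitz continuity of x''
  have lip : ∀ T : ℝ, 0 ≤ T → ∃ K : NNReal, LipschitzOnWith K x'' (Icc 0 T) := by
    intro T hT
    have hne : (Icc (0:ℝ) T).Nonempty := Set.nonempty_Icc.2 hT
    have hsub : Icc (0:ℝ) T ⊆ Ici 0 := Icc_subset_Ici_self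
    have hx'c : ContinuousOn x' (Icc 0 T) :=
      fun t ht => ((hx2 t (hsub ht)).continuousWithinAt).mono hsub
    have hx''c : ContinuousOn x'' (Icc 0 T) := hx2c.mono hsub
    obtain ⟨t0, ht0, h0⟩ := isCompact_Icc.exists_isMaxOn hne hx'c.norm
    obtain ⟨t1, ht1, h1⟩ := isCompact_Icc.exists_isMaxOn hne hx''c.norm
    set M0 := ‖x' t0‖ with hM0def
    set M1 := ‖x'' t1‖ with hM1def
    have hM0 : 0 ≤ M0 := norm_nonneg _
    have hM1 : 0 ≤ M1 := norm_nonneg _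
    have xlip : ∀ s ∈ Icc (0:ℝ) T, ∀ t ∈ Icc (0:ℝ) T, ‖x s - x t‖ ≤ M0 * ‖s - t‖ :=
      fun s hs t ht => (convex_Icc 0 T).norm_image_sub_le_of_norm_hasDerivWithin_le
        (fun u hu => (hx1 u (hsub hu)).mono hsub) (fun u hu => h0 hu) ht hs
    have x'lip : ∀ s ∈ Icc (0:ℝ) T, ∀ t ∈ Icc (0:ℝ) T, ‖x' s - x' t‖ ≤ M1 * ‖s - t‖ :=
      fun s hs t ht => (convex_Icc 0 T).norm_image_sub_le_of_norm_hasDerivWithin_le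
        (fun u hu => (hx2 u (hsub hu)).mono hsub) (fun u hu => h1 hu) ht hs
    refine ⟨((2 + c0) * M0 + γ * M1).toNNReal, ?_⟩
    rw [lipschitzOnWith_iff_dist_le_mul]
    intro s hs t ht
    rw [dist_eq_norm, dist_eq_norm]
    have e1 : x'' s = prox (x s - lam • g' (x s)) - γ • x' s - x s := by
      rw [← hode s (hsub hs)]; abel
    have e2 : x'' t = prox (x t - lam • g' (x t)) - γ • x' t - x t := by
      rw [← hode t (hsub ht)]; abel
    have ed : x'' s - x'' t = (prox (x s - lam • g' (x s)) - prox (x t - lam • g' (x t)))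
        - γ • (x' s - x' t) - (x s - x t) := by
      rw [e1, e2, smul_sub]; abel
    have hb : ‖x'' s - x'' t‖ ≤ (1 + c0) * ‖x s - x t‖ + γ * ‖x' s - x' t‖ + ‖x s - x t‖ := by
      rw [ed]
      calc ‖_ - γ • (x' s - x' t) - (x s - x t)‖
          ≤ ‖_ - γ • (x' s - x' t)‖ + ‖x s - x t‖ := norm_sub_le _ _
        _ ≤ ‖prox (x s - lam • g' (x s)) - prox (x t - lam • g' (x t))‖
            + ‖γ • (x' s - x' t)‖ + ‖x s - x t‖ := by
            have := norm_sub_le (prox (x s - lam • g' (x s)) - prox (x t - lam • g' (x t)))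
              (γ • (x' s - x' t))
            linarith
        _ ≤ (1 + c0) * ‖x s - x t‖ + γ * ‖x' s - x' t‖ + ‖x s - x t‖ := by
            have h3 := Philip (x s) (x t)
            have h4 : ‖γ • (x' s - x' t)‖ = γ * ‖x' s - x' t‖ := by
              rw [norm_smul, Real.norm_eq_abs, abs_of_pos hγ]
            linarith
    have hd : ‖s - t‖ = dist s t := (dist_eq_norm s t).symm
    have hx1b := xlip s hs t ht
    have hx2b := x'lip s hs t ht
    have : ‖x'' s - x'' t‖ ≤ ((2 + c0) * M0 + γ * M1) * dist s t := by
      rw [← hd]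
      nlinarith [norm_nonneg (s - t), hγ.le]
    refine this.trans (mul_le_mul_of_nonneg_right ?_ dist_nonneg)
    rw [Real.coe_toNNReal']
    exact le_max_left _ _
  refine ⟨lip, fun t => derivWithin x'' (Ici 0) t, ?_⟩
  have adiffn : ∀ N : ℕ, ∀ᵐ t ∂(volume : Measure ℝ),
      t ∈ Icc (0:ℝ) N → DifferentiableWithinAt ℝ x'' (Icc (0:ℝ) N) t := by
    intro N
    obtain ⟨K, hK⟩ := lip N (Nat.cast_nonneg N)
    exact hK.ae_differentiableWithinAt_of_mem
  have adiff : ∀ᵐ t ∂(volume : Measure ℝ),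
      t ∈ Ici (0:ℝ) → DifferentiableWithinAt ℝ x'' (Ici 0) t := by
    filter_upwards [ae_all_iff.2 adiffn] with t htall ht
    obtain ⟨N, hN⟩ := exists_nat_gt t
    have hmem : Icc (0:ℝ) N ∈ 𝓝[Ici 0] t := by
      refine mem_nhdsWithin.2 ⟨Iio (N:ℝ), isOpen_Iio, hN, ?_⟩
      rintro u ⟨hu1, hu2⟩
      exact ⟨hu2, le_of_lt hu1⟩
    exact (htall N ⟨ht, hN.le⟩).mono_of_mem_nhdsWithin hmem
  rw [ae_restrict_iff' measurableSet_Ici]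
  filter_upwards [adiff] with t hdiff ht
  have hd : HasDerivWithinAt x'' (derivWithin x'' (Ici 0) t) (Ici 0) t :=
    (hdiff ht).hasDerivWithinAt
  refine ⟨hd, ?_⟩
  set x3t := derivWithin x'' (Ici 0) t with hx3t
  set D := x3t + γ • x'' t + x' t with hD
  have hψ : HasDerivWithinAt (fun s => x'' s + γ • x' s + x s) D (Ici 0) t :=
    (hd.add ((hx2 t ht).const_smul γ)).add (hx1 t ht)
  haveI hne : (𝓝[(Ici (0:ℝ)) \ {t}] t).NeBot := by
    refine Filter.neBot_of_le (f := 𝓝[Ioi t] t) (nhdsWithin_mono t ?_)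
    intro u hu
    exact ⟨show (0:ℝ) ≤ u from le_trans (show (0:ℝ) ≤ t from ht) (le_of_lt hu), ne_of_gt hu⟩
  have h1 : Tendsto (slope (fun s => x'' s + γ • x' s + x s) t) (𝓝[(Ici (0:ℝ)) \ {t}] t) (𝓝 D) :=
    hasDerivWithinAt_iff_tendsto_slope.1 hψ
  have h2 : Tendsto (slope x t) (𝓝[(Ici (0:ℝ)) \ {t}] t) (𝓝 (x' t)) :=
    hasDerivWithinAt_iff_tendsto_slope.1 (hx1 t ht)
  have hDle : ‖D‖ ≤ (1 + c0) * ‖x' t‖ := by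
    refine le_of_tendsto_of_tendsto h1.norm (h2.norm.const_mul (1 + c0)) ?_
    filter_upwards [self_mem_nhdsWithin] with s hs
    obtain ⟨hs0, hst⟩ := hs
    have e1 : (fun s => x'' s + γ • x' s + x s) s - (fun s => x'' s + γ • x' s + x s) t
        = prox (x s - lam • g' (x s)) - prox (x t - lam • g' (x t)) := by
      simp only
      rw [hode s hs0, hode t ht]
    simp only [slope_def_module, norm_smul, Real.norm_eq_abs]
    rw [e1]
    have := Philip (x s) (x t)
    have habs : 0 ≤ |(s - t)⁻¹| := abs_nonneg _
    calc |(s - t)⁻¹| * ‖prox (x s - lam • g' (x s)) - prox (x t - lam • g' (x t))‖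
        ≤ |(s - t)⁻¹| * ((1 + c0) * ‖x s - x t‖) := by
          exact mul_le_mul_of_nonneg_left this habs
      _ = (1 + c0) * (|(s - t)⁻¹| * ‖x s - x t‖) := by ring
  have hfinal : ‖x3t‖ ≤ (2 + c0) * ‖x' t‖ + γ * ‖x'' t‖ := by
    have e3 : x3t = D - γ • x'' t - x' t := by rw [hD]; abel
    have h4 : ‖γ • x'' t‖ = γ * ‖x'' t‖ := by
      rw [norm_smul, Real.norm_eq_abs, abs_of_pos hγ]
    calc ‖x3t‖ = ‖D - γ • x'' t - x' t‖ := by rw [e3]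
      _ ≤ ‖D - γ • x'' t‖ + ‖x' t‖ := norm_sub_le _ _
      _ ≤ ‖D‖ + ‖γ • x'' t‖ + ‖x' t‖ := by
          have := norm_sub_le D (γ • x'' t); linarith
      _ ≤ (2 + c0) * ‖x' t‖ + γ * ‖x'' t‖ := by rw [h4]; linarith
  -- numeric conclusion
  set a := ‖x' t‖ with ha
  set b := ‖x'' t‖ with hb
  have ha0 : 0 ≤ a := norm_nonneg _
  have hb0 : 0 ≤ b := norm_nonneg _
  have hsq : ‖x3t‖^2 ≤ ((2 + c0) * a + γ * b)^2 :=
    pow_le_pow_left₀ (norm_nonneg _) hfinal 2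
  have hL1 : (Lone γ lam β)^2 = max ((γ + 1)^2) ((γ + 2) * ((1 + lam * β)^2 + 1)) := by
    rw [Lone, Real.sq_sqrt]
    exact le_max_of_le_left (sq_nonneg _)
  have hL2 : (Ltwo γ lam β)^2
      = max ((γ + 1)^2 + γ * lam * β) ((2 + lam * β)^2 + γ * (2 + lam * β)) := by
    rw [Ltwo, Real.sq_sqrt]
    refine le_max_of_le_left (by positivity)
  have hL1n : 0 ≤ Lone γ lam β := Real.sqrt_nonneg _
  have hL2n : 0 ≤ Ltwo γ lam β := Real.sqrt_nonneg _
  have hLLsq : (LL γ lam β)^2 = min ((Lone γ lam β)^2) ((Ltwo γ lam β)^2) := by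
    rw [LL]
    rcases le_total (Lone γ lam β) (Ltwo γ lam β) with h | h
    · rw [min_eq_left h, min_eq_left (pow_le_pow_left₀ hL1n h 2)]
    · rw [min_eq_right h, min_eq_right (pow_le_pow_left₀ hL2n h 2)]
  have goal2 : ((2 + c0) * a + γ * b)^2
      ≤ (LL γ lam β)^2 * a^2 + ((LL γ lam β)^2 - 1) * b^2 := by
    rw [hLLsq]
    rcases le_total ((Lone γ lam β)^2) ((Ltwo γ lam β)^2) with h | h
    · rw [min_eq_left h, hL1]
      refine num1 γ c0 a b _ hγ hc0 ha0 hb0 (le_max_left _ _) ?_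
      rw [hc0def]
      exact le_max_right _ _
    · rw [min_eq_right h, hL2]
      refine num2 γ c0 a b _ hγ hc0 ha0 hb0 ?_ ?_
      · rw [hc0def, ← mul_assoc]
        exact le_max_left _ _
      · rw [hc0def]
        exact le_max_right _ _
  exact hsq.trans goal2
end

section
/- Let γ, λ > 0 and β ≥ 0 be real numbers with γλβ ≤ 1/3. Then C < 0 and B > A, where L₁ := √(max{(γ+1)², (γ+2)((1+λβ)²+1)}), L₂ := √(max{(γ+1)² + γλβ, (2+λβ)² + γ(2+λβ)}), L := min{L₁, L₂}, A := −γ/(2λ) + (β/2)(L²+2γ²+1), B := −γ/(2λL²) + (β/2)(L²+γ²+1) and C := −(2L²+1)γ²/(L²+1)² + 3βγλ − 1. -/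
open Set Filter Topology MeasureTheory

theorem stmt_9 (γ lam β : ℝ) (hγ : 0 < γ) (hlam : 0 < lam) (hβ : 0 ≤ β)
    (h13 : γ * lam * β ≤ 1/3) :
    CC γ lam β < 0 ∧ AA γ lam β < BB γ lam β := by
  have hL1 : 2 ≤ Lone γ lam β := by
    have h4 : (4:ℝ) ≤ max ((γ + 1)^2) ((γ + 2) * ((1 + lam * β)^2 + 1)) := by
      refine le_trans ?_ (le_max_right _ _)
      nlinarith [sq_nonneg (1 + lam * β), mul_nonneg hlam.le hβ]
    have h := Real.sqrt_le_sqrt h4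
    rwa [show (4:ℝ) = 2^2 by norm_num, Real.sqrt_sq (by norm_num : (0:ℝ) ≤ 2)] at h
  have hL2 : 2 ≤ Ltwo γ lam β := by
    have h4 : (4:ℝ) ≤ max ((γ + 1)^2 + γ * lam * β) ((2 + lam * β)^2 + γ * (2 + lam * β)) := by
      refine le_trans ?_ (le_max_right _ _)
      nlinarith [mul_nonneg hlam.le hβ, mul_nonneg (mul_nonneg hlam.le hβ) (mul_nonneg hlam.le hβ)]
    have h := Real.sqrt_le_sqrt h4
    rwa [show (4:ℝ) = 2^2 by norm_num, Real.sqrt_sq (by norm_num : (0:ℝ) ≤ 2)] at h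
  have hL : 2 ≤ LL γ lam β := le_min hL1 hL2
  set s : ℝ := (LL γ lam β)^2 with hs
  have hs4 : 4 ≤ s := by nlinarith
  have hs0 : 0 < s := by linarith
  constructor
  · rw [CC]
    have hpos : 0 < ((2 * s + 1) / (s + 1)^2) * γ^2 := by positivity
    have h3 : 3 * β * γ * lam ≤ 1 := by nlinarith
    linarith
  · rw [AA, BB]
    have h1 : γ / (2 * lam * s) ≤ γ / (8 * lam) := by
      exact div_le_div_of_nonneg_left hγ.le (by positivity) (by nlinarith)
    have h2 : (β / 2) * γ^2 < γ / (2 * lam) - γ / (8 * lam) := by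
      have heq : γ / (2 * lam) - γ / (8 * lam) = 3 * γ / (8 * lam) := by
        field_simp; ring
      rw [heq, lt_div_iff₀ (by positivity)]
      nlinarith
    linarith
end

section
/- Assume that f+g is bounded from below and that γ, λ satisfy condition (ρ). Let x : [0,+∞) → ℝⁿ be the unique twice continuously differentiable global solution of the dynamical system (2). Then for every t ∈ [0,+∞) and every a ≥ 0, the vector w(t) := (−∇g(x(t)) + ∇g(ẍ(t)+γẋ(t)+x(t)) − (aγ/λ)ẋ(t), −(1/λ)(ẍ(t)+(1−a)γẋ(t)), −(C/λ)ẋ(t)) belongs to S(ẍ(t)+γẋ(t)+x(t), aγẋ(t)+x(t), ẋ(t)); equivalently, −(1/λ)ẍ(t) − (γ/λ)ẋ(t) − ∇g(x(t)) ∈ ∂f(ẍ(t)+γẋ(t)+x(t)). Moreover ‖w(t)‖ ≤ (β + 1/λ)‖ẍ(t)‖ + ((βλγ + (2a+1)γ − C)/λ)‖ẋ(t)‖. -/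
open Set Filter Topology MeasureTheory

lemma e3_le {n : ℕ} (p q r : EuclideanSpace ℝ (Fin n)) : e3 (p, q, r) ≤ ‖p‖ + ‖q‖ + ‖r‖ := by
  simp only [e3]
  have h9 : ‖p‖^2 + ‖q‖^2 + ‖r‖^2 ≤ (‖p‖ + ‖q‖ + ‖r‖)^2 := by
    nlinarith [norm_nonneg p, norm_nonneg q, norm_nonneg r]
  calc Real.sqrt (‖p‖^2 + ‖q‖^2 + ‖r‖^2) ≤ Real.sqrt ((‖p‖ + ‖q‖ + ‖r‖)^2) :=
        Real.sqrt_le_sqrt h9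
    _ = ‖p‖ + ‖q‖ + ‖r‖ := Real.sqrt_sq (by positivity)

lemma prox_mem_subdiff {n : ℕ} (f : EuclideanSpace ℝ (Fin n) → EReal)
    (hproper : (∃ z, f z ≠ ⊤) ∧ (∀ z, f z ≠ ⊥))
    (hconv : ∀ x y : EuclideanSpace ℝ (Fin n), ∀ t : ℝ, 0 ≤ t → t ≤ 1 →
      f (t • x + (1 - t) • y) ≤ (t : EReal) * f x + ((1 - t : ℝ) : EReal) * f y)
    (lam : ℝ) (hlam : 0 < lam) (z y : EuclideanSpace ℝ (Fin n))
    (hy : ∀ w, f y + (((1/(2*lam)) * ‖y - z‖^2 : ℝ) : EReal)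
      ≤ f w + (((1/(2*lam)) * ‖w - z‖^2 : ℝ) : EReal)) :
    (1/lam) • (z - y) ∈ subdiff f y := by
  obtain ⟨⟨z₀, hz₀⟩, hbot⟩ := hproper
  set s : ℝ := 1/(2*lam) with hs_def
  have hs : 0 < s := by positivity
  have hytop : f y ≠ ⊤ := by
    intro h
    have h1 := hy z₀
    rw [h, EReal.top_add_coe] at h1
    exact absurd (h1.trans_lt (EReal.add_lt_top hz₀ (EReal.coe_ne_top _))) (lt_irrefl _)
  set fy : ℝ := (f y).toReal with hfy_def
  have hfy : f y = (fy : EReal) := (EReal.coe_toReal hytop (hbot y)).symm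
  intro w
  by_cases hwtop : f w = ⊤
  · rw [hwtop]; exact le_top
  set fw : ℝ := (f w).toReal with hfw_def
  have hfw : f w = (fw : EReal) := (EReal.coe_toReal hwtop (hbot w)).symm
  set I : ℝ := inner ℝ (z - y) (w - y) with hI_def
  set N : ℝ := ‖w - y‖^2 with hN_def
  have hN0 : 0 ≤ N := by positivity
  have key : ∀ t : ℝ, 0 < t → t ≤ 1 → fy + 2*s*I ≤ fw + s*t*N := by
    intro t ht ht1
    have h1 := hy (t • w + (1 - t) • y)
    have h2 := hconv w y t ht.le ht1
    have h3 : f y + (((s * ‖y - z‖^2 : ℝ)) : EReal)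
        ≤ ((t : EReal) * f w + ((1 - t : ℝ) : EReal) * f y) + ((s * ‖t • w + (1 - t) • y - z‖^2 : ℝ) : EReal) :=
      h1.trans (add_le_add h2 le_rfl)
    rw [hfy, hfw, ← EReal.coe_mul, ← EReal.coe_mul, ← EReal.coe_add, ← EReal.coe_add,
      ← EReal.coe_add, EReal.coe_le_coe_iff] at h3
    have hwt : t • w + (1 - t) • y - z = (y - z) + t • (w - y) := by module
    rw [hwt, norm_add_sq_real, real_inner_smul_right, norm_smul, Real.norm_eq_abs,
      abs_of_pos ht, mul_pow] at h3
    have hIm : inner ℝ (y - z) (w - y) = -I := by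
      have hzy : y - z = -(z - y) := by module
      rw [hzy, inner_neg_left, hI_def]
    rw [hIm, ← hN_def] at h3
    have h4 : t * (fy + 2*s*I) ≤ t * (fw + s*t*N) := by nlinarith [h3]
    exact le_of_mul_le_mul_left h4 ht
  have hreal : fy + 2*s*I ≤ fw := by
    apply le_of_forall_pos_le_add
    intro ε hε
    have htpos : 0 < min 1 (ε/(s*N+1)) := lt_min one_pos (by positivity)
    have h5 := key _ htpos (min_le_left _ _)
    have h6 : min 1 (ε/(s*N+1)) ≤ ε/(s*N+1) := min_le_right _ _
    have h7 : s * min 1 (ε/(s*N+1)) * N ≤ ε := by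
      have hsN : 0 ≤ s*N := by positivity
      have h8 : min 1 (ε/(s*N+1)) * (s*N+1) ≤ ε := by
        rw [← le_div_iff₀ (by positivity)] at *; exact h6
      nlinarith [htpos.le]
    linarith
  have hinner : (inner ℝ ((1/lam) • (z - y)) (w - y) : ℝ) = 2*s*I := by
    rw [real_inner_smul_left, ← hI_def, hs_def]; ring
  rw [hfy, hfw, hinner, ← EReal.coe_add, EReal.coe_le_coe_iff]
  exact hreal


theorem stmt_13 (n : ℕ) (hn : 1 ≤ n) (β lam γ : ℝ)
    (hβ : 0 ≤ β) (hlam : 0 < lam) (hγ : 0 < γ)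
    (f : EuclideanSpace ℝ (Fin n) → EReal)
    (hproper : (∃ z, f z ≠ ⊤) ∧ (∀ z, f z ≠ ⊥))
    (hconv : ∀ x y : EuclideanSpace ℝ (Fin n), ∀ t : ℝ, 0 ≤ t → t ≤ 1 →
      f (t • x + (1 - t) • y) ≤ (t : EReal) * f x + ((1 - t : ℝ) : EReal) * f y)
    (hlsc : LowerSemicontinuous f)
    (g : EuclideanSpace ℝ (Fin n) → ℝ)
    (g' : EuclideanSpace ℝ (Fin n) → EuclideanSpace ℝ (Fin n))
    (hg : ∀ u, HasGradientAt g (g' u) u)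
    (hglip : ∀ u v, ‖g' u - g' v‖ ≤ β * ‖u - v‖)
    (prox : EuclideanSpace ℝ (Fin n) → EuclideanSpace ℝ (Fin n))
    (hprox : ∀ z y, f (prox z) + (((1/(2*lam)) * ‖prox z - z‖^2 : ℝ) : EReal)
      ≤ f y + (((1/(2*lam)) * ‖y - z‖^2 : ℝ) : EReal))
    (hproxu : ∀ z y, (∀ w, f y + (((1/(2*lam)) * ‖y - z‖^2 : ℝ) : EReal)
      ≤ f w + (((1/(2*lam)) * ‖w - z‖^2 : ℝ) : EReal)) → y = prox z)
    (x x' x'' : ℝ → EuclideanSpace ℝ (Fin n))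
    (hx1 : ∀ t ∈ Ici (0:ℝ), HasDerivWithinAt x (x' t) (Ici 0) t)
    (hx2 : ∀ t ∈ Ici (0:ℝ), HasDerivWithinAt x' (x'' t) (Ici 0) t)
    (hx2c : ContinuousOn x'' (Ici 0))
    (hode : ∀ t ∈ Ici (0:ℝ), x'' t + γ • x' t + x t = prox (x t - lam • g' (x t)))
    (hbdd : ∃ m : ℝ, ∀ z, (m : EReal) ≤ f z + (g z : EReal))
    (hρA : AA γ lam β < 0) (hρB : BB γ lam β < 0) (hρC : CC γ lam β < 0)
    :
    ∀ t ∈ Ici (0:ℝ), ∀ a : ℝ, 0 ≤ a →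
      ((-((1/lam) • x'' t) - ((γ/lam) • x' t) - g' (x t))
          ∈ subdiff f (x'' t + γ • x' t + x t)) ∧
      ((-g' (x t) + g' (x'' t + γ • x' t + x t) - ((a * γ/lam) • x' t),
          -((1/lam) • (x'' t + ((1 - a) * γ) • x' t)),
          -((CC γ lam β/lam) • x' t))
        ∈ Sset f g' lam (CC γ lam β)
            (x'' t + γ • x' t + x t) ((a * γ) • x' t + x t) (x' t)) ∧
      e3 (-g' (x t) + g' (x'' t + γ • x' t + x t) - ((a * γ/lam) • x' t),
          -((1/lam) • (x'' t + ((1 - a) * γ) • x' t)),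
          -((CC γ lam β/lam) • x' t))
        ≤ (β + 1/lam) * ‖x'' t‖
          + ((β * lam * γ + (2 * a + 1) * γ - CC γ lam β)/lam) * ‖x' t‖ := by
  intro t ht a ha
  have hlam' : lam ≠ 0 := ne_of_gt hlam
  set u := x'' t + γ • x' t + x t with hu_def
  set z := x t - lam • g' (x t) with hz_def
  have hode' : u = prox z := hode t ht
  have hmin : ∀ w, f u + (((1/(2*lam)) * ‖u - z‖^2 : ℝ) : EReal)
      ≤ f w + (((1/(2*lam)) * ‖w - z‖^2 : ℝ) : EReal) := by
    rw [hode']; exact hprox z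
  have hp : (1/lam) • (z - u) ∈ subdiff f u := prox_mem_subdiff f hproper hconv lam hlam z u hmin
  have hpe : (1/lam) • (z - u) = -((1/lam) • x'' t) - ((γ/lam) • x' t) - g' (x t) := by
    rw [hu_def, hz_def]
    match_scalars <;> field_simp <;> ring
  rw [hpe] at hp
  refine ⟨hp, ⟨_, hp, ?_⟩, ?_⟩
  · simp only [Prod.mk.injEq]
    refine ⟨?_, ?_, by trivial⟩ <;>
    · rw [hu_def]; match_scalars <;> field_simp <;> ring
  · have hq1 : ‖-g' (x t) + g' u - ((a * γ/lam) • x' t)‖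
        ≤ β * ‖x'' t‖ + (β * γ + a * γ / lam) * ‖x' t‖ := by
      have h1 : ‖g' u - g' (x t)‖ ≤ β * ‖u - x t‖ := hglip u (x t)
      have h2 : u - x t = x'' t + γ • x' t := by rw [hu_def]; module
      have h3 : ‖u - x t‖ ≤ ‖x'' t‖ + γ * ‖x' t‖ := by
        rw [h2]
        calc ‖x'' t + γ • x' t‖ ≤ ‖x'' t‖ + ‖γ • x' t‖ := norm_add_le _ _
        _ = ‖x'' t‖ + γ * ‖x' t‖ := by rw [norm_smul, Real.norm_eq_abs, abs_of_pos hγ]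
      have h4 : -g' (x t) + g' u - ((a * γ/lam) • x' t)
          = (g' u - g' (x t)) + (-((a * γ/lam) • x' t)) := by module
      calc ‖-g' (x t) + g' u - ((a * γ/lam) • x' t)‖
          ≤ ‖g' u - g' (x t)‖ + ‖-((a * γ/lam) • x' t)‖ := by rw [h4]; exact norm_add_le _ _
        _ = ‖g' u - g' (x t)‖ + (a * γ/lam) * ‖x' t‖ := by
            rw [norm_neg, norm_smul, Real.norm_eq_abs, abs_of_nonneg (by positivity)]
        _ ≤ β * (‖x'' t‖ + γ * ‖x' t‖) + (a * γ/lam) * ‖x' t‖ := by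
            have := h1.trans (by nlinarith [h3] : β * ‖u - x t‖ ≤ β * (‖x'' t‖ + γ * ‖x' t‖))
            linarith
        _ = β * ‖x'' t‖ + (β * γ + a * γ / lam) * ‖x' t‖ := by ring
    have hq2 : ‖-((1/lam) • (x'' t + ((1 - a) * γ) • x' t))‖
        ≤ (1/lam) * ‖x'' t‖ + ((1 + a) * γ / lam) * ‖x' t‖ := by
      rw [norm_neg, norm_smul, Real.norm_eq_abs, abs_of_pos (by positivity)]
      have h5 : ‖x'' t + ((1 - a) * γ) • x' t‖ ≤ ‖x'' t‖ + |1 - a| * γ * ‖x' t‖ := by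
        calc ‖x'' t + ((1 - a) * γ) • x' t‖ ≤ ‖x'' t‖ + ‖((1 - a) * γ) • x' t‖ := norm_add_le _ _
          _ = ‖x'' t‖ + |1 - a| * γ * ‖x' t‖ := by
              rw [norm_smul, Real.norm_eq_abs, abs_mul, abs_of_pos hγ]
      have h6 : |1 - a| ≤ 1 + a := by rw [abs_le]; constructor <;> linarith
      have h7 : (0:ℝ) < 1/lam := by positivity
      have h8 : |1 - a| * γ * ‖x' t‖ ≤ (1 + a) * γ * ‖x' t‖ :=
        mul_le_mul_of_nonneg_right (mul_le_mul_of_nonneg_right h6 hγ.le) (norm_nonneg (x' t))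
      calc (1/lam) * ‖x'' t + ((1 - a) * γ) • x' t‖
          ≤ (1/lam) * (‖x'' t‖ + (1 + a) * γ * ‖x' t‖) := by nlinarith [h5]
        _ = (1/lam) * ‖x'' t‖ + ((1 + a) * γ / lam) * ‖x' t‖ := by ring
    have hq3 : ‖-((CC γ lam β/lam) • x' t)‖ = (-(CC γ lam β)/lam) * ‖x' t‖ := by
      rw [norm_neg, norm_smul, Real.norm_eq_abs, abs_of_neg (div_neg_of_neg_of_pos hρC hlam)]
      ring
    refine (e3_le _ _ _).trans ?_
    have hsum : β * ‖x'' t‖ + (β * γ + a * γ / lam) * ‖x' t‖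
        + ((1/lam) * ‖x'' t‖ + ((1 + a) * γ / lam) * ‖x' t‖)
        + (-(CC γ lam β)/lam) * ‖x' t‖
        = (β + 1/lam) * ‖x'' t‖
          + ((β * lam * γ + (2 * a + 1) * γ - CC γ lam β)/lam) * ‖x' t‖ := by
      field_simp; ring
    linarith [hq1, hq2, hq3.le, hsum.le]
end
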